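/- Under the union-bound setup: let K ≥ 2, T ≥ K, p ∈ (0,2], and suppose for each arm i ∈ [K] and round r ∈ [K−1] an event E_{i,r} has probability at most 2 exp(−2 n_r (Δ_{(K+1−r)}/4)²), where n_r = ⌈(T−K)/(C_p (K−r+1)^p)⌉. Then the probability of the union of all K(K−1) events is at most 2 K² exp(−(T−K)/(8 C_p H(p))). -/

import Mathlib

open Finset MeasureTheory

theorem union_bound_nsar
    {Ω : Type*} [MeasurableSpace Ω] (μ : Measure Ω) [IsProbabilityMeasure μ]
    (K T : ℕ) (hK : 2 ≤ K) (hT : K ≤ T)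
    (p : ℝ) (hp0 : 0 < p) (hp2 : p ≤ 2) (Δ : ℕ → ℝ)
    (hpos : ∀ i ∈ Finset.Icc 2 K, 0 < Δ i)
    (hmono : ∀ i ∈ Finset.Icc 2 K, ∀ j ∈ Finset.Icc 2 K, i ≤ j → Δ i ≤ Δ j)
    (E : ℕ → ℕ → Set Ω)
    (hprob : ∀ i ∈ Finset.Icc 1 K, ∀ r ∈ Finset.Icc 1 (K - 1),
      μ (E i r) ≤ ENNReal.ofReal (2 * Real.exp (-2 *
        (Nat.ceil (((T : ℝ) - K) /
          (((2 : ℝ) ^ (-p) + ∑ s ∈ Finset.Icc 2 K, (s : ℝ) ^ (-p)) *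
            ((K - r + 1 : ℕ) : ℝ) ^ p)) : ℝ) *
        (Δ (K + 1 - r) / 4) ^ 2))) :
    μ (⋃ i ∈ Finset.Icc 1 K, ⋃ r ∈ Finset.Icc 1 (K - 1), E i r) ≤
      ENNReal.ofReal (2 * (K : ℝ) ^ 2 * Real.exp (-((T : ℝ) - K) /
        (8 * ((2 : ℝ) ^ (-p) + ∑ s ∈ Finset.Icc 2 K, (s : ℝ) ^ (-p)) *
          (Finset.Icc 2 K).sup' (Finset.nonempty_Icc.mpr hK)
            (fun i => (i : ℝ) ^ p / (Δ i) ^ 2)))) := by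
  set C : ℝ := (2 : ℝ) ^ (-p) + ∑ s ∈ Finset.Icc 2 K, (s : ℝ) ^ (-p) with hCdef
  set H : ℝ := (Finset.Icc 2 K).sup' (Finset.nonempty_Icc.mpr hK)
      (fun i => (i : ℝ) ^ p / (Δ i) ^ 2) with hHdef
  have hC : 0 < C := by
    have h1 : (0:ℝ) < (2:ℝ) ^ (-p) := Real.rpow_pos_of_pos (by norm_num) _
    have h2 : (0:ℝ) ≤ ∑ s ∈ Finset.Icc 2 K, (s : ℝ) ^ (-p) :=
      Finset.sum_nonneg fun s hs => le_of_lt (Real.rpow_pos_of_pos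
        (by exact_mod_cast Nat.lt_of_lt_of_le (by norm_num) (Finset.mem_Icc.mp hs).1) _)
    linarith
  have h2K : 2 ∈ Finset.Icc 2 K := Finset.mem_Icc.mpr ⟨le_refl 2, hK⟩
  have hH : 0 < H := by
    have := Finset.le_sup' (fun i : ℕ => (i : ℝ) ^ p / (Δ i) ^ 2) h2K
    have h1 : (0:ℝ) < ((2:ℕ) : ℝ) ^ p / (Δ 2) ^ 2 := by
      apply div_pos (Real.rpow_pos_of_pos (by norm_num) _)
      exact pow_pos (hpos 2 h2K) 2
    linarith
  have ht0 : (0:ℝ) ≤ (T : ℝ) - K := by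
    have : (K:ℝ) ≤ T := by exact_mod_cast hT
    linarith
  set B : ℝ := 2 * Real.exp (-((T : ℝ) - K) / (8 * C * H)) with hBdef
  have hterm : ∀ i ∈ Finset.Icc 1 K, ∀ r ∈ Finset.Icc 1 (K - 1),
      μ (E i r) ≤ ENNReal.ofReal B := by
    intro i hi r hr
    refine (hprob i hi r hr).trans (ENNReal.ofReal_le_ofReal ?_)
    have hr' := Finset.mem_Icc.mp hr
    have hmem : K + 1 - r ∈ Finset.Icc 2 K := by
      rw [Finset.mem_Icc]; omega
    have hΔ : 0 < Δ (K + 1 - r) := hpos _ hmem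
    have hHb : ((K + 1 - r : ℕ) : ℝ) ^ p / (Δ (K + 1 - r)) ^ 2 ≤ H :=
      Finset.le_sup' (fun i : ℕ => (i : ℝ) ^ p / (Δ i) ^ 2) hmem
    have heq : (K - r + 1 : ℕ) = (K + 1 - r : ℕ) := by omega
    set m : ℝ := ((K + 1 - r : ℕ) : ℝ) with hmdef
    have hm0 : (0:ℝ) < m := by
      have h : (0:ℕ) < K + 1 - r := by omega
      rw [hmdef]; exact_mod_cast h
    have hm : 0 < m ^ p := Real.rpow_pos_of_pos hm0 _
    have hn : ((T : ℝ) - K) / (C * m ^ p) ≤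
        (Nat.ceil (((T : ℝ) - K) / (C * m ^ p)) : ℝ) := Nat.le_ceil _
    rw [heq, hBdef]
    gcongr 2 * Real.exp ?_
    rw [neg_div]
    have hΔ2 : 0 < (Δ (K + 1 - r)) ^ 2 := pow_pos hΔ 2
    have hCne : C ≠ 0 := hC.ne'
    have hmne : m ^ p ≠ 0 := hm.ne'
    have hΔne : Δ (K + 1 - r) ≠ 0 := hΔ.ne'
    -- key: (T-K)/(8CH) ≤ 2 * n * (Δ/4)^2
    set n : ℝ := (Nat.ceil (((T : ℝ) - K) / (C * m ^ p)) : ℝ) with hndef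
    have hkey : ((T : ℝ) - K) / (8 * C * H) ≤ 2 * n * (Δ (K + 1 - r) / 4) ^ 2 := by
      have hn0 : (0:ℝ) ≤ n := by rw [hndef]; positivity
      have h1 : m ^ p ≤ H * (Δ (K + 1 - r)) ^ 2 := (div_le_iff₀ hΔ2).mp hHb
      have h2 : (T : ℝ) - K ≤ n * (C * m ^ p) := (div_le_iff₀ (by positivity)).mp hn
      rw [div_le_iff₀ (by positivity)]
      nlinarith [mul_le_mul_of_nonneg_left h1 (mul_nonneg hn0 hC.le)]
    -- goal: -2 * n * (Δ/4)^2 ≤ -((T-K)/(8CH))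
    nlinarith [hkey]
  -- union bound
  have hsum : μ (⋃ i ∈ Finset.Icc 1 K, ⋃ r ∈ Finset.Icc 1 (K - 1), E i r) ≤
      ∑ i ∈ Finset.Icc 1 K, ∑ r ∈ Finset.Icc 1 (K - 1), μ (E i r) := by
    refine (measure_biUnion_finset_le _ _).trans ?_
    exact Finset.sum_le_sum fun i _ => measure_biUnion_finset_le _ _
  refine hsum.trans ?_
  have hcard1 : (Finset.Icc 1 K).card = K := by simp [Nat.card_Icc]
  have hcard2 : (Finset.Icc 1 (K-1)).card = K - 1 := by simp [Nat.card_Icc]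
  have hstep : ∑ i ∈ Finset.Icc 1 K, ∑ r ∈ Finset.Icc 1 (K - 1), μ (E i r) ≤
      (K * (K - 1) : ℕ) • ENNReal.ofReal B := by
    calc ∑ i ∈ Finset.Icc 1 K, ∑ r ∈ Finset.Icc 1 (K - 1), μ (E i r)
        ≤ ∑ i ∈ Finset.Icc 1 K, (K - 1 : ℕ) • ENNReal.ofReal B := by
          refine Finset.sum_le_sum fun i hi => ?_
          have := Finset.sum_le_card_nsmul (Finset.Icc 1 (K-1)) (fun r => μ (E i r))
            (ENNReal.ofReal B) (fun r hr => hterm i hi r hr)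
          rwa [hcard2] at this
      _ ≤ (K : ℕ) • ((K - 1 : ℕ) • ENNReal.ofReal B) := by
          have := Finset.sum_le_card_nsmul (Finset.Icc 1 K)
            (fun _ => (K - 1 : ℕ) • ENNReal.ofReal B)
            ((K - 1 : ℕ) • ENNReal.ofReal B) (fun i _ => le_refl _)
          rwa [hcard1] at this
      _ = (K * (K - 1) : ℕ) • ENNReal.ofReal B := by rw [mul_smul]
  refine hstep.trans ?_
  rw [nsmul_eq_mul]
  rw [← ENNReal.ofReal_natCast (K * (K - 1)), ← ENNReal.ofReal_mul (by positivity)]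
  apply ENNReal.ofReal_le_ofReal
  have hexp : 0 < Real.exp (-((T : ℝ) - K) / (8 * C * H)) := Real.exp_pos _
  have hKK : ((K * (K - 1) : ℕ) : ℝ) ≤ (K : ℝ) ^ 2 := by
    have : (K * (K - 1) : ℕ) ≤ K * K := Nat.mul_le_mul_left K (Nat.sub_le K 1)
    calc ((K * (K - 1) : ℕ) : ℝ) ≤ ((K * K : ℕ) : ℝ) := by exact_mod_cast this
      _ = (K : ℝ) ^ 2 := by push_cast; ring
  rw [hBdef]
  nlinarith [hexp, hKK]
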